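/- Theorem 1 (optimality of trivial reparameterization for symmetric binary GMs), two-factor instance: let f, g : {1,2} × {1,2} → ℝ>0 be symmetric (f(2,2)=f(1,1), f(2,1)=f(1,2), and same for g), let w₁, w₂ > 0 with w₁ + w₂ = 1, and define for θ : {1,2} → ℝ with θ(1) + θ(2) unconstrained but reparameterization constraint e^{θ(x)} · e^{-θ(x)} = 1 (i.e., factor f gets multiplied by e^{θ(x₁)} and g by e^{-θ(x₁)}): F(θ) = ∑_y (∑_x (e^{θ(x)} f(x,y))^{1/w₁})^{w₁} (∑_x (e^{-θ(x)} g(x,y))^{1/w₂})^{w₂}. Then θ ≡ 0 is a global minimizer of F. -/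

import Mathlib

open Finset Real

/-- The reparameterized WMBE bound for the two-factor GM sharing the split
binary variable `x` (weights `w₁, w₂`), the second variable `y` being
eliminated exactly. -/
noncomputable def reparamWMBE (f g : Bool × Bool → ℝ) (w₁ w₂ : ℝ)
    (θ : Bool → ℝ) : ℝ :=
  ∑ y : Bool,
    (∑ x : Bool, (Real.exp (θ x) * f (x, y)) ^ (1 / w₁)) ^ w₁ *
      (∑ x : Bool, (Real.exp (-θ x) * g (x, y)) ^ (1 / w₂)) ^ w₂

/-- two-term AM-GM from a bound on the product -/
lemma amgm_two (T₁ T₂ K : ℝ) (h1 : 0 < T₁) (h2 : 0 < T₂) (hK : 0 ≤ K)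
    (h : K ^ 2 ≤ T₁ * T₂) : 2 * K ≤ T₁ + T₂ := by
  nlinarith [sq_nonneg (T₁ - T₂), sq_nonneg (T₁ + T₂ - 2 * K)]

/-- cross-product inequality -/
lemma cross (p q a b : ℝ) (ha : 0 < a) (hb : 0 < b) :
    Real.exp (p + q) * (a + b) ^ 2 ≤
      (Real.exp p * a + Real.exp q * b) * (Real.exp p * b + Real.exp q * a) := by
  have h := Real.exp_add p q
  nlinarith [mul_nonneg (sq_nonneg (Real.exp p - Real.exp q)) (mul_pos ha hb).le,
    Real.exp_pos p, Real.exp_pos q]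

lemma master (a b c d s t w₁ w₂ : ℝ) (ha : 0 < a) (hb : 0 < b) (hc : 0 < c)
    (hd : 0 < d) (hw₁ : 0 < w₁) (hw₂ : 0 < w₂) (hw : w₁ + w₂ = 1) :
    2 * ((a + b) ^ w₁ * (c + d) ^ w₂) ≤
      (Real.exp (s / w₁) * a + Real.exp (t / w₁) * b) ^ w₁ *
        (Real.exp (-s / w₂) * c + Real.exp (-t / w₂) * d) ^ w₂ +
      (Real.exp (s / w₁) * b + Real.exp (t / w₁) * a) ^ w₁ *
        (Real.exp (-s / w₂) * d + Real.exp (-t / w₂) * c) ^ w₂ := by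
  set P₁ := Real.exp (s / w₁) * a + Real.exp (t / w₁) * b with hP₁
  set P₂ := Real.exp (s / w₁) * b + Real.exp (t / w₁) * a with hP₂
  set Q₁ := Real.exp (-s / w₂) * c + Real.exp (-t / w₂) * d with hQ₁
  set Q₂ := Real.exp (-s / w₂) * d + Real.exp (-t / w₂) * c with hQ₂
  have hP₁pos : 0 < P₁ := by positivity
  have hP₂pos : 0 < P₂ := by positivity
  have hQ₁pos : 0 < Q₁ := by positivity
  have hQ₂pos : 0 < Q₂ := by positivity
  have habpos : (0:ℝ) < a + b := by linarith
  have hcdpos : (0:ℝ) < c + d := by linarith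
  have hKpos : 0 < (a + b) ^ w₁ * (c + d) ^ w₂ := by positivity
  apply amgm_two _ _ _ (by positivity) (by positivity) hKpos.le
  -- key product bound
  have hP : Real.exp (s / w₁ + t / w₁) * (a + b) ^ 2 ≤ P₁ * P₂ := cross _ _ _ _ ha hb
  have hQ : Real.exp (-s / w₂ + -t / w₂) * (c + d) ^ 2 ≤ Q₁ * Q₂ := cross _ _ _ _ hc hd
  have h1 : (Real.exp (s / w₁ + t / w₁) * (a + b) ^ 2) ^ w₁ ≤ (P₁ * P₂) ^ w₁ :=
    Real.rpow_le_rpow (by positivity) hP hw₁.le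
  have h2 : (Real.exp (-s / w₂ + -t / w₂) * (c + d) ^ 2) ^ w₂ ≤ (Q₁ * Q₂) ^ w₂ :=
    Real.rpow_le_rpow (by positivity) hQ hw₂.le
  have e1 : (Real.exp (s / w₁ + t / w₁) * (a + b) ^ 2) ^ w₁
      = Real.exp (s + t) * ((a + b) ^ w₁) ^ 2 := by
    rw [Real.mul_rpow (Real.exp_pos _).le (by positivity), ← Real.exp_mul]
    have hx : (s / w₁ + t / w₁) * w₁ = s + t := by field_simp
    rw [hx]
    congr 1
    rw [← Real.rpow_natCast (a+b) 2, ← Real.rpow_natCast ((a+b)^w₁) 2,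
      ← Real.rpow_mul habpos.le, ← Real.rpow_mul habpos.le]
    norm_num [mul_comm]
  have e2 : (Real.exp (-s / w₂ + -t / w₂) * (c + d) ^ 2) ^ w₂
      = Real.exp (-(s + t)) * ((c + d) ^ w₂) ^ 2 := by
    rw [Real.mul_rpow (Real.exp_pos _).le (by positivity), ← Real.exp_mul]
    have hx : (-s / w₂ + -t / w₂) * w₂ = -(s + t) := by field_simp; ring
    rw [hx]
    congr 1
    rw [← Real.rpow_natCast (c+d) 2, ← Real.rpow_natCast ((c+d)^w₂) 2,
      ← Real.rpow_mul hcdpos.le, ← Real.rpow_mul hcdpos.le]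
    norm_num [mul_comm]
  have key : ((a + b) ^ w₁ * (c + d) ^ w₂) ^ 2 ≤ (P₁ * P₂) ^ w₁ * (Q₁ * Q₂) ^ w₂ := by
    calc ((a + b) ^ w₁ * (c + d) ^ w₂) ^ 2
        = (Real.exp (s + t) * ((a + b) ^ w₁) ^ 2) *
          (Real.exp (-(s + t)) * ((c + d) ^ w₂) ^ 2) := by
          have hex : Real.exp (s+t) * Real.exp (-(s+t)) = 1 := by
            rw [← Real.exp_add]; simp
          linear_combination (-(((a+b)^w₁)^2*((c+d)^w₂)^2)) * hex
      _ ≤ (P₁ * P₂) ^ w₁ * (Q₁ * Q₂) ^ w₂ := by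
          rw [← e1, ← e2]
          exact mul_le_mul h1 h2 (by positivity) (by positivity)
  calc ((a + b) ^ w₁ * (c + d) ^ w₂) ^ 2
      ≤ (P₁ * P₂) ^ w₁ * (Q₁ * Q₂) ^ w₂ := key
    _ = P₁ ^ w₁ * Q₁ ^ w₂ * (P₂ ^ w₁ * Q₂ ^ w₂) := by
        rw [Real.mul_rpow hP₁pos.le hP₂pos.le, Real.mul_rpow hQ₁pos.le hQ₂pos.le]; ring

/-- split `(exp u * v) ^ (1/w)` -/
lemma split_rpow (u v w : ℝ) (hv : 0 < v) (hw : 0 < w) :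
    (Real.exp u * v) ^ (1 / w) = Real.exp (u / w) * v ^ (1 / w) := by
  rw [Real.mul_rpow (Real.exp_pos _).le hv.le, ← Real.exp_mul]
  congr 2
  field_simp

/-- Theorem 1 (two-factor instance): for strictly positive symmetric factors
`f, g` and Hölder weights `w₁, w₂ > 0` with `w₁ + w₂ = 1`, the trivial
reparameterization `θ ≡ 0` globally minimizes the reparameterized WMBE bound. -/
theorem trivial_reparam_optimal (f g : Bool × Bool → ℝ)
    (hf : ∀ p, 0 < f p) (hg : ∀ p, 0 < g p)
    (hfsym : ∀ a b, f (!a, !b) = f (a, b))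
    (hgsym : ∀ a b, g (!a, !b) = g (a, b))
    (w₁ w₂ : ℝ) (hw₁ : 0 < w₁) (hw₂ : 0 < w₂) (hw : w₁ + w₂ = 1) :
    ∀ θ : Bool → ℝ, reparamWMBE f g w₁ w₂ 0 ≤ reparamWMBE f g w₁ w₂ θ := by
  intro θ
  have hf11 : f (true, true) = f (false, false) := hfsym false false
  have hf01 : f (false, true) = f (true, false) := by
    simpa using hfsym true false
  have hg11 : g (true, true) = g (false, false) := hgsym false false
  have hg01 : g (false, true) = g (true, false) := by
    simpa using hgsym true false
  unfold reparamWMBE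
  simp only [Fintype.sum_bool, Pi.zero_apply, neg_zero, Real.exp_zero, one_mul,
    hf11, hf01, hg11, hg01]
  rw [split_rpow _ _ _ (hf _) hw₁, split_rpow _ _ _ (hf _) hw₁,
    split_rpow _ _ _ (hf _) hw₁, split_rpow _ _ _ (hf _) hw₁,
    split_rpow _ _ _ (hg _) hw₂, split_rpow _ _ _ (hg _) hw₂,
    split_rpow _ _ _ (hg _) hw₂, split_rpow _ _ _ (hg _) hw₂]
  refine le_trans (le_of_eq ?_)
    (master (f (false, false) ^ (1 / w₁)) (f (true, false) ^ (1 / w₁))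
      (g (false, false) ^ (1 / w₂)) (g (true, false) ^ (1 / w₂))
      (θ true) (θ false) w₁ w₂
      (Real.rpow_pos_of_pos (hf _) _) (Real.rpow_pos_of_pos (hf _) _)
      (Real.rpow_pos_of_pos (hg _) _) (Real.rpow_pos_of_pos (hg _) _) hw₁ hw₂ hw)
  rw [add_comm (f (true, false) ^ (1 / w₁)), add_comm (g (true, false) ^ (1 / w₂))]
  ring
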